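/- Under the hypotheses of the A_k-chain configuration (vertices 1,…,k of a weighted graph on {1,…,n} over a field K form a chain: a_{i,i+1} = 1 for 1 ≤ i ≤ k−1, a_{ij} = 0 for other pairs i < j ≤ k, and a_{ij} = 0 for i ≤ k−1 < j), with C_i(q) the Coxeter polynomial of the induced subgraph on {i+1,…,n} (C₀ the whole graph), q ≠ 0 and z = q + q⁻¹, the following 2×2 matrix identity holds for all 1 ≤ i ≤ k−1: [[C_{i−1}(q), C_i(q)], [C_i(q), C_{i+1}(q)]] = [[0, 1], [−1, z]]^{i−1} · [[C₀(q), C₁(q)], [C₁(q), C₂(q)]]. -/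

import Mathlib

open Matrix Finset

/-- The Seifert matrix of a weighted graph on `Fin n` with symmetric weights `a`. -/
def chainSeifert {K : Type*} [Field K] {n : ℕ} (a : Fin n → Fin n → K) :
    Matrix (Fin n) (Fin n) K :=
  Matrix.of fun i j => if i = j then (1 : K) else if i < j then -a i j else 0

/-- `coxMatrix a t = t • S + t⁻¹ • Sᵀ`, whose determinant is the Coxeter polynomial. -/
def coxMatrix {K : Type*} [Field K] {n : ℕ} (a : Fin n → Fin n → K) (t : K) :
    Matrix (Fin n) (Fin n) K :=
  t • chainSeifert a + t⁻¹ • (chainSeifert a)ᵀ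

/-- `chainC a t i` is the Coxeter polynomial of the induced subgraph on the vertices
`{i, i+1, …, n-1}` of `Fin n` (i.e. vertices `{i+1, …, n}` in 1-based numbering);
for `i = 0` it is the Coxeter polynomial of the whole graph. -/
def chainC {K : Type*} [Field K] {n : ℕ} (a : Fin n → Fin n → K) (t : K) (i : ℕ) : K :=
  ((coxMatrix a t).submatrix
    (fun x : Fin (n - i) => (⟨i + x.val, by have := x.isLt; omega⟩ : Fin n))
    (fun x : Fin (n - i) => (⟨i + x.val, by have := x.isLt; omega⟩ : Fin n))).det



lemma detExpand {K : Type*} [Field K] {s : ℕ} (M : Matrix (Fin (s+2)) (Fin (s+2)) K)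
    (hrow : ∀ j : Fin s, M 0 j.succ.succ = 0)
    (hcol : ∀ i : Fin s, M i.succ.succ 0 = 0) :
    M.det = M 0 0 * (M.submatrix Fin.succ Fin.succ).det
      - M 0 1 * M 1 0 * (M.submatrix (Fin.succ ∘ Fin.succ) (Fin.succ ∘ Fin.succ)).det := by
  rw [Matrix.det_succ_row_zero, Fin.sum_univ_succ, Fin.sum_univ_succ]
  have hrest : ∀ j : Fin s, (-1 : K) ^ (((j.succ.succ : Fin (s+2))) : ℕ) * M 0 j.succ.succ *
      (M.submatrix Fin.succ (j.succ.succ).succAbove).det = 0 := by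
    intro j; rw [hrow j]; ring
  rw [Finset.sum_congr rfl (fun j _ => hrest j), Finset.sum_const_zero, add_zero]
  -- now compute the two minors
  have h1 : ((0 : Fin (s+1)).succ) = (1 : Fin (s+2)) := rfl
  have hminor1 : (M.submatrix Fin.succ ((1 : Fin (s+2)).succAbove)).det
      = M 1 0 * (M.submatrix (Fin.succ ∘ Fin.succ) (Fin.succ ∘ Fin.succ)).det := by
    rw [Matrix.det_succ_column_zero, Fin.sum_univ_succ]
    have hrest2 : ∀ i : Fin s, (-1 : K) ^ (((i.succ : Fin (s+1))) : ℕ) *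
        (M.submatrix Fin.succ ((1 : Fin (s+2)).succAbove)) i.succ 0 *
        (((M.submatrix Fin.succ ((1 : Fin (s+2)).succAbove)).submatrix i.succ.succAbove Fin.succ)).det = 0 := by
      intro i
      have : (M.submatrix Fin.succ ((1 : Fin (s+2)).succAbove)) i.succ 0 = 0 := by
        simp [Matrix.submatrix_apply]
        exact hcol i
      rw [this]; ring
    rw [Finset.sum_congr rfl (fun i _ => hrest2 i), Finset.sum_const_zero, add_zero]
    have e1 : (M.submatrix Fin.succ ((1 : Fin (s+2)).succAbove)) 0 0 = M 1 0 := by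
      simp [Matrix.submatrix_apply]
    have e2 : ((M.submatrix Fin.succ ((1 : Fin (s+2)).succAbove)).submatrix
        ((0 : Fin (s+1)).succAbove) Fin.succ)
        = M.submatrix (Fin.succ ∘ Fin.succ) (Fin.succ ∘ Fin.succ) := by
      ext x y
      simp [Matrix.submatrix_apply, Fin.succAbove_zero]
    rw [e1, e2]
    simp
  simp only [Fin.succAbove_zero, h1, hminor1]
  simp [Fin.val_one]
  ring

lemma chainC_rec {K : Type*} [Field K] {n k : ℕ}
    (a : Fin n → Fin n → K) (q : K) (hq : q ≠ 0) (hkn : k ≤ n)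
    (hchain : ∀ i : ℕ, (h : i + 1 < k) →
      a ⟨i, Nat.lt_of_lt_of_le (by omega) hkn⟩ ⟨i + 1, Nat.lt_of_lt_of_le h hkn⟩ = 1)
    (hzero : ∀ i j : ℕ, (hi : i < k) → (hj : j < k) → i < j → j ≠ i + 1 →
      a ⟨i, Nat.lt_of_lt_of_le hi hkn⟩ ⟨j, Nat.lt_of_lt_of_le hj hkn⟩ = 0)
    (hcut : ∀ i j : ℕ, (hi : i + 1 < k) → (hj : k ≤ j) → (hjn : j < n) →
      a ⟨i, Nat.lt_of_lt_of_le (by omega) hkn⟩ ⟨j, hjn⟩ = 0)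
    (m : ℕ) (hm : m + 1 < k) :
    chainC a q m = (q + q⁻¹) * chainC a q (m+1) - chainC a q (m+2) := by
  have hmn : m + 1 < n := by omega
  set s := n - m - 2 with hs
  have h2 : n - m = s + 2 := by omega
  have h1 : n - (m+1) = s + 1 := by omega
  have h0 : n - (m+2) = s := by omega
  set M : Matrix (Fin (s+2)) (Fin (s+2)) K :=
    Matrix.of (fun x y : Fin (s+2) =>
      coxMatrix a q ⟨m + x.val, by have := x.isLt; omega⟩ ⟨m + y.val, by have := y.isLt; omega⟩)
    with hM
  have key : ∀ (r t : ℕ) (h : n - r = t) (hrn : r + t ≤ n),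
      chainC a q r = ((Matrix.of (fun x y : Fin t =>
        coxMatrix a q ⟨r + x.val, by omega⟩ ⟨r + y.val, by omega⟩)).det) := by
    intro r t h hrn
    subst h
    rfl
  have hCm : chainC a q m = M.det := key m (s+2) h2 (by omega)
  have hC1 : chainC a q (m+1) = (M.submatrix Fin.succ Fin.succ).det := by
    rw [key (m+1) (s+1) h1 (by omega)]
    congr 1
    ext x y
    simp only [Matrix.submatrix_apply, hM, Matrix.of_apply]
    congr 2 <;> simp [Fin.ext_iff] <;> omega
  have hC2 : chainC a q (m+2) = (M.submatrix (Fin.succ ∘ Fin.succ) (Fin.succ ∘ Fin.succ)).det := by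
    rw [key (m+2) s h0 (by omega)]
    congr 1
    ext x y
    simp only [Matrix.submatrix_apply, hM, Matrix.of_apply, Function.comp_apply]
    congr 2 <;> simp [Fin.ext_iff] <;> omega
  have azero : ∀ (u : ℕ) (hu : u < n), m + 2 ≤ u → a ⟨m, by omega⟩ ⟨u, hu⟩ = 0 := by
    intro u hu h
    rcases lt_or_ge u k with hlt | hle
    · exact hzero m u (by omega) hlt (by omega) (by omega)
    · exact hcut m u hm hle hu
  have hM00 : M 0 0 = q + q⁻¹ := by
    simp [hM, coxMatrix, chainSeifert]
  have hM01 : M 0 1 = -q := by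
    simp only [hM, Matrix.of_apply, coxMatrix, chainSeifert, Matrix.add_apply,
      Matrix.smul_apply, Matrix.transpose_apply, smul_eq_mul]
    rw [if_neg (by simp [Fin.ext_iff]), if_pos (by simp [Fin.lt_def]),
      if_neg (by simp [Fin.ext_iff]), if_neg (by simp [Fin.lt_def])]
    have : a (⟨m + ↑(0 : Fin (s+2)), by omega⟩ : Fin n) ⟨m + ↑(1 : Fin (s+2)), by omega⟩ = 1 := by
      have h01 : ((1 : Fin (s+2)) : ℕ) = 1 := rfl
      have h00 : ((0 : Fin (s+2)) : ℕ) = 0 := rfl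
      have e1 : (⟨m + ↑(0 : Fin (s+2)), by omega⟩ : Fin n) = ⟨m, by omega⟩ := by
        simp [Fin.ext_iff, h00]
      have e2 : (⟨m + ↑(1 : Fin (s+2)), by omega⟩ : Fin n) = ⟨m + 1, by omega⟩ := by
        simp [Fin.ext_iff, h01]
      rw [e1, e2]
      exact hchain m hm
    rw [this]
    ring
  have hM10 : M 1 0 = -q⁻¹ := by
    simp only [hM, Matrix.of_apply, coxMatrix, chainSeifert, Matrix.add_apply,
      Matrix.smul_apply, Matrix.transpose_apply, smul_eq_mul]
    rw [if_neg (by simp [Fin.ext_iff]), if_neg (by simp [Fin.lt_def]),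
      if_neg (by simp [Fin.ext_iff]), if_pos (by simp [Fin.lt_def])]
    have : a (⟨m + ↑(0 : Fin (s+2)), by omega⟩ : Fin n) ⟨m + ↑(1 : Fin (s+2)), by omega⟩ = 1 := by
      have h01 : ((1 : Fin (s+2)) : ℕ) = 1 := rfl
      have h00 : ((0 : Fin (s+2)) : ℕ) = 0 := rfl
      have e1 : (⟨m + ↑(0 : Fin (s+2)), by omega⟩ : Fin n) = ⟨m, by omega⟩ := by
        simp [Fin.ext_iff, h00]
      have e2 : (⟨m + ↑(1 : Fin (s+2)), by omega⟩ : Fin n) = ⟨m + 1, by omega⟩ := by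
        simp [Fin.ext_iff, h01]
      rw [e1, e2]
      exact hchain m hm
    rw [this]
    ring
  have hrow : ∀ j : Fin s, M 0 j.succ.succ = 0 := by
    intro j
    simp only [hM, Matrix.of_apply, coxMatrix, chainSeifert, Matrix.add_apply,
      Matrix.smul_apply, Matrix.transpose_apply, smul_eq_mul]
    rw [if_neg (by simp [Fin.ext_iff]), if_pos (by simp [Fin.lt_def]),
      if_neg (by simp [Fin.ext_iff]), if_neg (by simp [Fin.lt_def])]
    have e1 : a (⟨m + ↑(0 : Fin (s+2)), by omega⟩ : Fin n)
        ⟨m + ↑(j.succ.succ), by have := j.isLt; simp [Fin.val_succ]; omega⟩ = 0 := by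
      have e0 : (⟨m + ↑(0 : Fin (s+2)), by omega⟩ : Fin n) = ⟨m, by omega⟩ := by
        simp [Fin.ext_iff]
      rw [e0]
      exact azero _ _ (by simp [Fin.val_succ])
    rw [e1]
    ring
  have hcol : ∀ i : Fin s, M i.succ.succ 0 = 0 := by
    intro i
    simp only [hM, Matrix.of_apply, coxMatrix, chainSeifert, Matrix.add_apply,
      Matrix.smul_apply, Matrix.transpose_apply, smul_eq_mul]
    rw [if_neg (by simp [Fin.ext_iff]), if_neg (by simp [Fin.lt_def]),
      if_neg (by simp [Fin.ext_iff]), if_pos (by simp [Fin.lt_def])]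
    have e1 : a (⟨m + ↑(0 : Fin (s+2)), by omega⟩ : Fin n)
        ⟨m + ↑(i.succ.succ), by have := i.isLt; simp [Fin.val_succ]; omega⟩ = 0 := by
      have e0 : (⟨m + ↑(0 : Fin (s+2)), by omega⟩ : Fin n) = ⟨m, by omega⟩ := by
        simp [Fin.ext_iff]
      rw [e0]
      exact azero _ _ (by simp [Fin.val_succ])
    rw [e1]
    ring
  rw [hCm, detExpand M hrow hcol, hM00, hM01, hM10, ← hC1, ← hC2]
  have hqq : -q * -q⁻¹ = 1 := by
    field_simp
  rw [hqq]
  ring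

/-- The transfer-matrix identity of Example 2: under the `A_k`-chain hypotheses,
`[[C_{i-1}, C_i], [C_i, C_{i+1}]] = [[0,1],[-1,z]]^(i-1) · [[C₀, C₁], [C₁, C₂]]`
for `1 ≤ i ≤ k - 1`, where `z = q + q⁻¹`. -/
theorem chain_transfer_matrix {K : Type*} [Field K] (n k : ℕ)
    (a : Fin n → Fin n → K) (hsym : ∀ i j, a i j = a j i)
    (q : K) (hq : q ≠ 0)
    (hk : 1 ≤ k) (hkn : k ≤ n)
    (hchain : ∀ i : ℕ, (h : i + 1 < k) →
      a ⟨i, by omega⟩ ⟨i + 1, by omega⟩ = 1)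
    (hzero : ∀ i j : ℕ, (hi : i < k) → (hj : j < k) → i < j → j ≠ i + 1 →
      a ⟨i, by omega⟩ ⟨j, by omega⟩ = 0)
    (hcut : ∀ i j : ℕ, (hi : i + 1 < k) → (hj : k ≤ j) → (hjn : j < n) →
      a ⟨i, by omega⟩ ⟨j, by omega⟩ = 0) :
    ∀ i : ℕ, 1 ≤ i → i < k →
      !![chainC a q (i - 1), chainC a q i; chainC a q i, chainC a q (i + 1)]
        = !![(0 : K), 1; -1, q + q⁻¹] ^ (i - 1) *
            !![chainC a q 0, chainC a q 1; chainC a q 1, chainC a q 2] := by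
  intro i hi hik
  induction i with
  | zero => omega
  | succ j ih =>
    rcases Nat.eq_zero_or_pos j with hj | hj
    · subst hj
      norm_num
    · have hjk : j < k := by omega
      have hprev := ih (by omega) hjk
      have hstep : (!![(0:K),1;-1,q+q⁻¹]) ^ ((j+1)-1)
          = !![(0:K),1;-1,q+q⁻¹] * !![(0:K),1;-1,q+q⁻¹] ^ (j-1) := by
        rw [show (j+1)-1 = (j-1)+1 by omega, pow_succ']
      rw [hstep, mul_assoc, ← hprev]
      have r1 : chainC a q (j-1) = (q+q⁻¹) * chainC a q j - chainC a q (j+1) := by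
        have h := chainC_rec a q hq hkn hchain hzero hcut (j-1) (by omega)
        rwa [show j-1+1 = j by omega, show j-1+2 = j+1 by omega] at h
      have r2 := chainC_rec a q hq hkn hchain hzero hcut j (by omega)
      rw [Matrix.mul_fin_two]
      have hj1 : j + 1 - 1 = j := rfl
      rw [hj1]
      ext x y
      fin_cases x <;> fin_cases y
      · simp
      · simp
      · simp
        linear_combination r1
      · simp
        linear_combination r2
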